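/- arXiv:1409.1454 — 2 statements merged into one kernel-verified Lean document; each statement's English description precedes it below -/
import Mathlib

section
/- For δ = 0, the Hessian of w₀ at the point e₁ = (1,0,0,0,0) is the diagonal matrix diag(2, −7, 2, 2, −7); in particular the multiset of eigenvalues of D²w₀(e₁) is {2, 2, 2, −7, −7}. -/
noncomputable section

open Matrix

/-- `E5` is Euclidean 5-space with coordinates `x = (x₁, x₂, z₁, z₂, z₃)`. -/
abbrev E5 := EuclideanSpace ℝ (Fin 5)

/-- Reinterpret a plain vector of `Fin 5 → ℝ` as a point of Euclidean space. -/
def toE5 (v : Fin 5 → ℝ) : E5 := (WithLp.equiv 2 (Fin 5 → ℝ)).symm v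

/-- The Cartan isoparametric cubic on ℝ⁵. -/
def CartanP (x : E5) : ℝ :=
  (x 0)^3 + (3 * x 0 / 2) * ((x 2)^2 + (x 3)^2 - 2*(x 4)^2 - 2*(x 1)^2)
    + (3 * Real.sqrt 3 / 2) * ((x 1) * (x 2)^2 - (x 1) * (x 3)^2 + 2 * x 2 * x 3 * x 4)

/-- The `i`-th standard coordinate vector of ℝ⁵. -/
def basisVec (i : Fin 5) : E5 := EuclideanSpace.single i 1

/-- The Hessian matrix of second partial derivatives of `f` at `x`. -/
def Hess (f : E5 → ℝ) (x : E5) : Matrix (Fin 5) (Fin 5) ℝ :=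
  fun i j => iteratedFDeriv ℝ 2 f x ![basisVec i, basisVec j]

/-- `wdel δ x = P(x)/|x|^{1+δ}` (equal to `0` at `x = 0`). -/
def wdel (δ : ℝ) (x : E5) : ℝ := CartanP x / ‖x‖ ^ (1 + δ)

def pr (i : Fin 5) : E5 →L[ℝ] ℝ := EuclideanSpace.proj i
@[simp] lemma pr_apply (i : Fin 5) (v : E5) : pr i v = v i := rfl
lemma hcoord (i : Fin 5) (y : E5) : HasFDerivAt (fun v : E5 => v i) (pr i) y :=
  (pr i).hasFDerivAt
lemma hnpow {f : E5 → ℝ} {f' : E5 →L[ℝ] ℝ} {x : E5} (n : ℕ) (h : HasFDerivAt f f' x) :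
    HasFDerivAt (fun y => f y ^ n) (((n : ℝ) * f x ^ (n - 1)) • f') x :=
  (hasDerivAt_pow n (f x)).comp_hasFDerivAt x h

def e1 : E5 := toE5 ![1,0,0,0,0]
@[simp] lemma e1_0 : e1 0 = 1 := rfl
@[simp] lemma e1_1 : e1 1 = 0 := rfl
@[simp] lemma e1_2 : e1 2 = 0 := rfl
@[simp] lemma e1_3 : e1 3 = 0 := rfl
@[simp] lemma e1_4 : e1 4 = 0 := rfl

def qq (y : E5) : ℝ := (y 0)^2 + ((y 1)^2 + ((y 2)^2 + ((y 3)^2 + (y 4)^2)))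
lemma hq (y : E5) : HasFDerivAt qq
    ((2*y 0) • pr 0 + ((2*y 1) • pr 1 + ((2*y 2) • pr 2 + ((2*y 3) • pr 3 + (2*y 4) • pr 4)))) y := by
  have h0 := hcoord 0 y; have h1 := hcoord 1 y; have h2 := hcoord 2 y
  have h3 := hcoord 3 y; have h4 := hcoord 4 y
  have H := (hnpow 2 h0).add ((hnpow 2 h1).add ((hnpow 2 h2).add ((hnpow 2 h3).add (hnpow 2 h4))))
  exact H.congr_fderiv (by ext v; simp; try ring)

lemma norm_eq_q (y : E5) : ‖y‖ = Real.sqrt (qq y) := by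
  rw [EuclideanSpace.norm_eq]
  congr 1
  simp [qq, Fin.sum_univ_five, Real.norm_eq_abs, sq_abs]; ring


def PP : Fin 5 → E5 → ℝ :=
  ![fun y => 3*(y 0)^2 + (3/2)*((y 2)^2+(y 3)^2-2*(y 4)^2-2*(y 1)^2),
    fun y => -(6*(y 0*y 1)) + (3*Real.sqrt 3/2)*((y 2)^2-(y 3)^2),
    fun y => 3*(y 0*y 2) + (3*Real.sqrt 3/2)*(2*(y 1*y 2)+2*(y 3*y 4)),
    fun y => 3*(y 0*y 3) + (3*Real.sqrt 3/2)*(2*(y 2*y 4)-2*(y 1*y 3)),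
    fun y => -(6*(y 0*y 4)) + (3*Real.sqrt 3/2)*(2*(y 2*y 3))]

lemma hP (y : E5) : HasFDerivAt CartanP
    (PP 0 y • pr 0 + PP 1 y • pr 1 + PP 2 y • pr 2 + PP 3 y • pr 3 + PP 4 y • pr 4) y := by
  have h0 := hcoord 0 y; have h1 := hcoord 1 y; have h2 := hcoord 2 y
  have h3 := hcoord 3 y; have h4 := hcoord 4 y
  have e : CartanP = (fun y : E5 =>
      ((y 0)^3 + (3/2 * y 0) * ((y 2)^2 + ((y 3)^2 - (2*(y 4)^2 + 2*(y 1)^2)))) +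
      (3*Real.sqrt 3/2) * ((y 1 * (y 2)^2 - y 1 * (y 3)^2) + 2*(y 2 * (y 3 * y 4)))) := by
    funext v; unfold CartanP; ring
  rw [e]
  have H := (((hnpow 3 h0).add ((h0.const_mul (3/2 : ℝ)).mul
      ((hnpow 2 h2).add ((hnpow 2 h3).sub (((hnpow 2 h4).const_mul 2).add
        ((hnpow 2 h1).const_mul 2)))))).add
      ((((h1.mul (hnpow 2 h2)).sub (h1.mul (hnpow 2 h3))).add
        ((h2.mul (h3.mul h4)).const_mul 2)).const_mul (3*Real.sqrt 3/2)))
  exact H.congr_fderiv (by ext v; simp [PP]; ring)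


def AA (j : Fin 5) (y : E5) : ℝ :=
  qq y ^ (-(1/2) : ℝ) * PP j y - qq y ^ (-(3/2) : ℝ) * (CartanP y * y j)

def DD (y : E5) : E5 →L[ℝ] ℝ :=
  AA 0 y • pr 0 + AA 1 y • pr 1 + AA 2 y • pr 2 + AA 3 y • pr 3 + AA 4 y • pr 4

lemma qq_cont : Continuous qq := by
  unfold qq; fun_prop

lemma wdel_eq {y : E5} (hy : 0 < qq y) : wdel 0 y = CartanP y * qq y ^ (-(1/2) : ℝ) := by
  unfold wdel
  rw [add_zero, Real.rpow_one, norm_eq_q, Real.sqrt_eq_rpow, div_eq_mul_inv,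
    ← Real.rpow_neg hy.le]

lemma hW {y : E5} (hy : 0 < qq y) : HasFDerivAt (wdel 0) (DD y) y := by
  have hr := (hq y).rpow_const (p := -(1/2)) (Or.inl hy.ne')
  have H := (hP y).mul hr
  have H' : HasFDerivAt (fun y : E5 => CartanP y * qq y ^ (-(1/2) : ℝ)) (DD y) y := by
    refine H.congr_fderiv ?_
    rw [show ((-(1/2) : ℝ) - 1) = (-(3/2) : ℝ) by norm_num]
    ext v
    simp [DD, AA, mul_comm]
    ring
  refine H'.congr_of_eventuallyEq ?_
  have hU : IsOpen {z : E5 | 0 < qq z} := isOpen_lt continuous_const qq_cont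
  filter_upwards [hU.mem_nhds hy] with z hz
  exact wdel_eq hz

@[simp] lemma qq_e1 : qq e1 = 1 := by simp [qq]
@[simp] lemma P_e1 : CartanP e1 = 1 := by simp [CartanP]
lemma qq_e1_pos : 0 < qq e1 := by simp

lemma hqe : HasFDerivAt qq ((2:ℝ) • pr 0) e1 :=
  (hq e1).congr_fderiv (by ext v; simp)

lemma hPe : HasFDerivAt CartanP ((3:ℝ) • pr 0) e1 :=
  (hP e1).congr_fderiv (by ext v; simp [PP, Matrix.vecHead, Matrix.vecTail]; try ring)

lemma hPP0 : HasFDerivAt (PP 0) ((6:ℝ) • pr 0) e1 := by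
  have h0 := hcoord 0 e1; have h1 := hcoord 1 e1; have h2 := hcoord 2 e1
  have h3 := hcoord 3 e1; have h4 := hcoord 4 e1
  have e : PP 0 = (fun y : E5 => 3*(y 0)^2 + (3/2)*((y 2)^2+((y 3)^2-(2*(y 4)^2+2*(y 1)^2)))) := by
    funext v; simp [PP]; ring
  rw [e]
  have H := ((hnpow 2 h0).const_mul 3).add (((hnpow 2 h2).add ((hnpow 2 h3).sub
    (((hnpow 2 h4).const_mul 2).add ((hnpow 2 h1).const_mul 2)))).const_mul (3/2))
  exact H.congr_fderiv (by ext v; simp; try ring)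

lemma hPP1 : HasFDerivAt (PP 1) ((-6:ℝ) • pr 1) e1 := by
  have h0 := hcoord 0 e1; have h1 := hcoord 1 e1; have h2 := hcoord 2 e1
  have h3 := hcoord 3 e1
  have e : PP 1 = (fun y : E5 => -(6*(y 0*y 1)) + (3*Real.sqrt 3/2)*((y 2)^2-(y 3)^2)) := by
    funext v; simp [PP]
  rw [e]
  have H := (((h0.mul h1).const_mul 6).neg).add (((hnpow 2 h2).sub (hnpow 2 h3)).const_mul (3*Real.sqrt 3/2))
  exact H.congr_fderiv (by ext v; simp; try ring)

lemma hPP2 : HasFDerivAt (PP 2) ((3:ℝ) • pr 2) e1 := by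
  have h0 := hcoord 0 e1; have h1 := hcoord 1 e1; have h2 := hcoord 2 e1
  have h3 := hcoord 3 e1; have h4 := hcoord 4 e1
  have e : PP 2 = (fun y : E5 => 3*(y 0*y 2) + (3*Real.sqrt 3/2)*(2*(y 1*y 2)+2*(y 3*y 4))) := by
    funext v; simp [PP]
  rw [e]
  have H := ((h0.mul h2).const_mul 3).add ((((h1.mul h2).const_mul 2).add ((h3.mul h4).const_mul 2)).const_mul (3*Real.sqrt 3/2))
  exact H.congr_fderiv (by ext v; simp; try ring)

lemma hPP3 : HasFDerivAt (PP 3) ((3:ℝ) • pr 3) e1 := by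
  have h0 := hcoord 0 e1; have h1 := hcoord 1 e1; have h2 := hcoord 2 e1
  have h3 := hcoord 3 e1; have h4 := hcoord 4 e1
  have e : PP 3 = (fun y : E5 => 3*(y 0*y 3) + (3*Real.sqrt 3/2)*(2*(y 2*y 4)-2*(y 1*y 3))) := by
    funext v; simp [PP]
  rw [e]
  have H := ((h0.mul h3).const_mul 3).add ((((h2.mul h4).const_mul 2).sub ((h1.mul h3).const_mul 2)).const_mul (3*Real.sqrt 3/2))
  exact H.congr_fderiv (by ext v; simp; try ring)

lemma hPP4 : HasFDerivAt (PP 4) ((-6:ℝ) • pr 4) e1 := by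
  have h0 := hcoord 0 e1; have h2 := hcoord 2 e1
  have h3 := hcoord 3 e1; have h4 := hcoord 4 e1
  have e : PP 4 = (fun y : E5 => -(6*(y 0*y 4)) + (3*Real.sqrt 3/2)*(2*(y 2*y 3))) := by
    funext v; simp [PP]
  rw [e]
  have H := (((h0.mul h4).const_mul 6).neg).add (((h2.mul h3).const_mul 2).const_mul (3*Real.sqrt 3/2))
  exact H.congr_fderiv (by ext v; simp; try ring)

lemma hre : HasFDerivAt (fun y : E5 => qq y ^ (-(1/2) : ℝ)) ((-1:ℝ) • pr 0) e1 := by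
  have H := hqe.rpow_const (p := -(1/2)) (Or.inl (by simp))
  exact H.congr_fderiv (by ext v; simp; try norm_num; try ring)

lemma hre3 : HasFDerivAt (fun y : E5 => qq y ^ (-(3/2) : ℝ)) ((-3:ℝ) • pr 0) e1 := by
  have H := hqe.rpow_const (p := -(3/2)) (Or.inl (by simp))
  exact H.congr_fderiv (by ext v; simp; try norm_num; try ring)

lemma hA0 : HasFDerivAt (AA 0) ((2:ℝ) • pr 0) e1 := by
  have H := (hre.mul hPP0).sub (hre3.mul (hPe.mul (hcoord 0 e1)))
  exact H.congr_fderiv (by ext v; simp [PP, Matrix.vecHead, Matrix.vecTail]; try norm_num; try ring)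

lemma hA1 : HasFDerivAt (AA 1) ((-7:ℝ) • pr 1) e1 := by
  have H := (hre.mul hPP1).sub (hre3.mul (hPe.mul (hcoord 1 e1)))
  exact H.congr_fderiv (by ext v; simp [PP, Matrix.vecHead, Matrix.vecTail]; try norm_num; try ring)

lemma hA2 : HasFDerivAt (AA 2) ((2:ℝ) • pr 2) e1 := by
  have H := (hre.mul hPP2).sub (hre3.mul (hPe.mul (hcoord 2 e1)))
  exact H.congr_fderiv (by ext v; simp [PP, Matrix.vecHead, Matrix.vecTail]; try norm_num; try ring)

lemma hA3 : HasFDerivAt (AA 3) ((2:ℝ) • pr 3) e1 := by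
  have H := (hre.mul hPP3).sub (hre3.mul (hPe.mul (hcoord 3 e1)))
  exact H.congr_fderiv (by ext v; simp [PP, Matrix.vecHead, Matrix.vecTail]; try norm_num; try ring)

lemma hA4 : HasFDerivAt (AA 4) ((-7:ℝ) • pr 4) e1 := by
  have H := (hre.mul hPP4).sub (hre3.mul (hPe.mul (hcoord 4 e1)))
  exact H.congr_fderiv (by ext v; simp [PP, Matrix.vecHead, Matrix.vecTail]; try norm_num; try ring)

def MM : E5 →L[ℝ] E5 →L[ℝ] ℝ :=
  (((2:ℝ) • pr 0).smulRight (pr 0)) + (((-7:ℝ) • pr 1).smulRight (pr 1)) +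
  (((2:ℝ) • pr 2).smulRight (pr 2)) + (((2:ℝ) • pr 3).smulRight (pr 3)) +
  (((-7:ℝ) • pr 4).smulRight (pr 4))

lemma hDD : HasFDerivAt DD MM e1 :=
  ((((hA0.smul_const (pr 0)).add (hA1.smul_const (pr 1))).add
    (hA2.smul_const (pr 2))).add (hA3.smul_const (pr 3))).add (hA4.smul_const (pr 4))

lemma key : fderiv ℝ (fderiv ℝ (wdel 0)) e1 = MM := by
  have hU : IsOpen {z : E5 | 0 < qq z} := isOpen_lt continuous_const qq_cont
  have hev : fderiv ℝ (wdel 0) =ᶠ[nhds e1] DD := by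
    filter_upwards [hU.mem_nhds qq_e1_pos] with z hz
    exact (hW hz).fderiv
  rw [hev.fderiv_eq, hDD.fderiv]


@[simp] lemma bv_apply (j i : Fin 5) : basisVec j i = if i = j then 1 else 0 :=
  EuclideanSpace.single_apply j 1 i

lemma MMe (i j : Fin 5) : MM (basisVec i) (basisVec j)
    = Matrix.diagonal ![2, -7, 2, 2, -7] i j := by
  simp only [MM, ContinuousLinearMap.add_apply, ContinuousLinearMap.smulRight_apply,
    ContinuousLinearMap.coe_smul', Pi.smul_apply, pr_apply, bv_apply, smul_eq_mul,
    Matrix.diagonal]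
  fin_cases i <;> fin_cases j <;> simp <;> norm_num


/-- For `δ = 0`, the Hessian of `w₀` at `e₁ = (1,0,0,0,0)` is
`diag(2, −7, 2, 2, −7)`; in particular its multiset of eigenvalues is
`{2, 2, 2, −7, −7}`. -/
theorem hessian_w0_at_e1 :
    Hess (wdel 0) (toE5 ![1, 0, 0, 0, 0]) = Matrix.diagonal ![2, -7, 2, 2, -7] ∧
    (Hess (wdel 0) (toE5 ![1, 0, 0, 0, 0])).charpoly.roots =
      ({2, 2, 2, -7, -7} : Multiset ℝ) := by
  have h1 : Hess (wdel 0) (toE5 ![1, 0, 0, 0, 0]) = Matrix.diagonal ![2, -7, 2, 2, -7] := by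
    funext i j
    show iteratedFDeriv ℝ 2 (wdel 0) e1 ![basisVec i, basisVec j] = _
    rw [iteratedFDeriv_two_apply, show (![basisVec i, basisVec j] 0) = basisVec i from rfl,
      show (![basisVec i, basisVec j] 1) = basisVec j from rfl, key]
    exact MMe i j
  refine ⟨h1, ?_⟩
  rw [h1]
  have hcm : Matrix.charmatrix (Matrix.diagonal ![2, -7, 2, 2, -7] : Matrix (Fin 5) (Fin 5) ℝ)
      = Matrix.diagonal (fun i => Polynomial.X - Polynomial.C (![2, -7, 2, 2, -7] i)) := by
    ext i j
    by_cases h : i = j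
    · subst h; simp
    · simp [Matrix.charmatrix_apply_ne _ _ _ h, Matrix.diagonal_apply_ne _ h]
  rw [Matrix.charpoly, hcm, Matrix.det_diagonal, Fin.prod_univ_five]
  simp only [Matrix.cons_val_zero, Matrix.cons_val_one, Matrix.head_cons,
    Matrix.cons_val_two, Matrix.tail_cons, Matrix.cons_val_three, Matrix.cons_val_four]
  have hm : ∀ a : ℝ, (Polynomial.X - Polynomial.C a).Monic := fun a => Polynomial.monic_X_sub_C a
  have ne1 := (hm (2:ℝ)).ne_zero
  have h12 := ((hm (2:ℝ)).mul (hm (-7)))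
  have h123 := h12.mul (hm (2:ℝ))
  have h1234 := h123.mul (hm (2:ℝ))
  rw [Polynomial.roots_mul (mul_ne_zero h1234.ne_zero (hm (-7:ℝ)).ne_zero),
      Polynomial.roots_mul (mul_ne_zero h123.ne_zero (hm (2:ℝ)).ne_zero),
      Polynomial.roots_mul (mul_ne_zero h12.ne_zero (hm (2:ℝ)).ne_zero),
      Polynomial.roots_mul (mul_ne_zero ne1 (hm (-7:ℝ)).ne_zero)]
  simp only [Polynomial.roots_X_sub_C]
  show ({2} + {-7} + {2} + {2} + {-7} : Multiset ℝ) = _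
  have h2 : ({2, 2, 2, -7, -7} : Multiset ℝ) = 2 ::ₘ 2 ::ₘ 2 ::ₘ -7 ::ₘ {-7} := rfl
  rw [h2]
  simp only [Multiset.singleton_add, Multiset.cons_add]
  congr 1
  rw [Multiset.cons_swap (-7 : ℝ) 2]
  congr 1
  rw [Multiset.cons_swap (-7 : ℝ) 2]
end
end

section
/- Let δ = 1/2 and for p ∈ [−1,1] let x_p := (p, 0, √(1−p²), 0, 0). For s, t ∈ (0,1], p, q ∈ [−1,1], set a := s·x_p, b := t·x_q and K := |s−t| + |p−q|. Then | |∇w_{1/2}(a)|² − |∇w_{1/2}(b)|² | ≤ 16·K. -/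
noncomputable section

open Matrix

/-- `w_{1/2}(x) = P(x)/|x|^{3/2}` (equal to `0` at `x = 0`). -/
def whalf (x : E5) : ℝ := CartanP x / ‖x‖ ^ (3/2 : ℝ)

/-- The point `x_p = (p, 0, √(1−p²), 0, 0)` of the unit sphere. -/
def spherePt (p : ℝ) : E5 := toE5 ![p, 0, Real.sqrt (1 - p^2), 0, 0]

def gP (x : E5) : E5 := toE5 ![
  3*(x 0)^2 + (3/2)*((x 2)^2+(x 3)^2-2*(x 4)^2-2*(x 1)^2),
  (3 * x 0 / 2)*(-4*(x 1)) + (3*Real.sqrt 3/2)*((x 2)^2-(x 3)^2),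
  (3 * x 0)*(x 2) + (3*Real.sqrt 3/2)*(2*(x 1)*(x 2)+2*(x 3)*(x 4)),
  (3 * x 0)*(x 3) + (3*Real.sqrt 3/2)*(-(2*(x 1)*(x 3))+2*(x 2)*(x 4)),
  -((3 * x 0)*(2*(x 4))) + (3*Real.sqrt 3/2)*(2*(x 2)*(x 3))]

lemma hasFDerivAt_coord (i : Fin 5) (x : E5) :
    HasFDerivAt (fun x : E5 => x i) (EuclideanSpace.proj (𝕜 := ℝ) i) x :=
  (EuclideanSpace.proj (𝕜 := ℝ) i).hasFDerivAt

lemma hasGradientAt_CartanP (x : E5) : HasGradientAt CartanP (gP x) x := by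
  rw [hasGradientAt_iff_hasFDerivAt]
  have h0 := hasFDerivAt_coord 0 x
  have h1 := hasFDerivAt_coord 1 x
  have h2 := hasFDerivAt_coord 2 x
  have h3 := hasFDerivAt_coord 3 x
  have h4 := hasFDerivAt_coord 4 x
  have H := ((((h0.mul h0).mul h0).add
      (((h0.const_mul ((3:ℝ)/2)).mul
        ((((h2.mul h2).add (h3.mul h3)).sub ((h4.mul h4).const_mul 2)).sub
          ((h1.mul h1).const_mul 2))))).add
      ((((h1.mul (h2.mul h2)).sub (h1.mul (h3.mul h3))).add
        (((h2.const_mul 2).mul h3).mul h4)).const_mul (3 * Real.sqrt 3 / 2)))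
  refine (H.congr_of_eventuallyEq (Filter.Eventually.of_forall fun z => ?_)).congr_fderiv ?_
  · simp only [CartanP, Pi.mul_apply, Pi.add_apply, Pi.sub_apply, Pi.pow_apply]; ring
  apply ContinuousLinearMap.ext
  intro y
  simp only [ContinuousLinearMap.add_apply, ContinuousLinearMap.smul_apply,
    ContinuousLinearMap.coe_smul', Pi.smul_apply, InnerProductSpace.toDual_apply_apply,
    smul_eq_mul, ContinuousLinearMap.coe_sub', Pi.sub_apply]
  rw [PiLp.inner_apply]
  simp only [PiLp.proj_apply]
  simp only [RCLike.inner_apply, starRingEnd_apply, star_trivial, Fin.sum_univ_five]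
  simp only [gP, toE5, WithLp.equiv_symm_apply, PiLp.toLp_apply, Matrix.cons_val_zero, Matrix.cons_val_one,
    Matrix.head_cons, Matrix.cons_val_two, Matrix.tail_cons, Matrix.cons_val_three,
    Matrix.cons_val_four, Pi.mul_apply, Pi.add_apply, Pi.pow_apply]
  ring

def gradW (x : E5) : E5 :=
  (‖x‖ ^ (3/2 : ℝ))⁻¹ • gP x - (3/2 * CartanP x * (‖x‖ ^ (7/2 : ℝ))⁻¹) • x


lemma hasGradientAt_whalf (x : E5) (hx : x ≠ 0) : HasGradientAt whalf (gradW x) x := by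
  have hR : (0:ℝ) < ‖x‖ := norm_pos_iff.mpr hx
  have hN2 : HasFDerivAt (fun y : E5 => ‖y‖^2) (2 • (innerSL ℝ x)) x :=
    (hasStrictFDerivAt_norm_sq x).hasFDerivAt
  have hrp : HasDerivAt (fun y : ℝ => y ^ (3/4:ℝ))
      (3/4 * (‖x‖^2) ^ ((3/4:ℝ)-1)) (‖x‖^2) :=
    Real.hasDerivAt_rpow_const (Or.inl (by positivity))
  have hN : HasFDerivAt (fun y : E5 => (‖y‖^2) ^ (3/4:ℝ))
      ((3/4 * (‖x‖^2) ^ ((3/4:ℝ)-1)) • (2 • (innerSL ℝ x))) x :=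
    by exact hrp.comp_hasFDerivAt x hN2
  have hfun : (fun y : E5 => (‖y‖^2 : ℝ) ^ (3/4:ℝ)) = fun y : E5 => ‖y‖ ^ (3/2:ℝ) := by
    funext z
    rw [← Real.rpow_natCast ‖z‖ 2, ← Real.rpow_mul (norm_nonneg z)]
    norm_num
  rw [hfun] at hN
  have hNne : ‖x‖ ^ (3/2:ℝ) ≠ 0 := by positivity
  have hNinv := (hasDerivAt_inv hNne).comp_hasFDerivAt x hN
  have hmul := (hasGradientAt_CartanP x).hasFDerivAt.mul hNinv
  rw [hasGradientAt_iff_hasFDerivAt]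
  have hwf : whalf =ᶠ[nhds x] fun y => CartanP y * (‖y‖ ^ (3/2:ℝ))⁻¹ :=
    Filter.Eventually.of_forall fun z => by rw [whalf, div_eq_mul_inv]
  refine (hmul.congr_of_eventuallyEq hwf).congr_fderiv ?_
  have ha : (0:ℝ) < ‖x‖ ^ ((1:ℝ)/2) := by positivity
  set a := ‖x‖ ^ ((1:ℝ)/2) with hadef
  have hane : a ≠ 0 := ne_of_gt ha
  have h2 : a ^ 2 = ‖x‖ := by
    rw [hadef, ← Real.rpow_natCast (‖x‖ ^ ((1:ℝ)/2)) 2, ← Real.rpow_mul hR.le]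
    norm_num
  have h3 : ‖x‖ ^ ((3:ℝ)/2) = a ^ 3 := by
    rw [hadef, ← Real.rpow_natCast (‖x‖ ^ ((1:ℝ)/2)) 3, ← Real.rpow_mul hR.le]
    norm_num
  have h7 : ‖x‖ ^ ((7:ℝ)/2) = a ^ 7 := by
    rw [hadef, ← Real.rpow_natCast (‖x‖ ^ ((1:ℝ)/2)) 7, ← Real.rpow_mul hR.le]
    norm_num
  have h14 : ((‖x‖^2 : ℝ)) ^ ((3/4:ℝ)-1) = a⁻¹ := by
    rw [hadef, ← Real.rpow_natCast ‖x‖ 2, ← Real.rpow_mul hR.le,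
      ← Real.rpow_neg_one (‖x‖ ^ ((1:ℝ)/2)), ← Real.rpow_mul hR.le]
    norm_num
  apply ContinuousLinearMap.ext
  intro y
  simp only [ContinuousLinearMap.add_apply, ContinuousLinearMap.smul_apply, Function.comp_apply,
    ContinuousLinearMap.coe_smul', Pi.smul_apply, smul_eq_mul, InnerProductSpace.toDual_apply_apply,
    innerSL_apply_apply]
  rw [gradW, inner_sub_left, inner_smul_left, inner_smul_left]
  simp only [conj_trivial, RCLike.conj_to_real, map_div₀, map_ofNat, map_inv₀, _root_.map_mul]
  rw [h3, h7, h14]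
  field_simp
  ring

lemma toE5_apply (v : Fin 5 → ℝ) (i : Fin 5) : toE5 v i = v i := rfl

lemma norm_sq_eq (x : E5) : ‖x‖^2 = (x 0)^2 + (x 1)^2 + (x 2)^2 + (x 3)^2 + (x 4)^2 := by
  rw [← real_inner_self_eq_norm_sq, PiLp.inner_apply]
  simp only [RCLike.inner_apply, conj_trivial, Fin.sum_univ_five]
  ring

lemma spherePt_norm (p : ℝ) (hp1 : -1 ≤ p) (hp2 : p ≤ 1) : ‖spherePt p‖ = 1 := by
  have h2 : ‖spherePt p‖^2 = 1 := by
    rw [norm_sq_eq]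
    simp only [spherePt, toE5_apply, Matrix.cons_val_zero, Matrix.cons_val_one, Matrix.head_cons,
      Matrix.cons_val_two, Matrix.tail_cons, Matrix.cons_val_three, Matrix.cons_val_four]
    rw [Real.sq_sqrt (by nlinarith : (0:ℝ) ≤ 1 - p^2)]
    ring
  nlinarith [norm_nonneg (spherePt p)]

set_option maxHeartbeats 1000000 in
lemma grad_norm_sq_value (s p : ℝ) (hs : 0 < s) (hp1 : -1 ≤ p) (hp2 : p ≤ 1) :
    ‖gradient whalf (s • spherePt p)‖^2 = 9*s - 27/16*s*(3*p - p^3)^2 := by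
  set v := Real.sqrt (1 - p^2) with hvdef
  have hv : v^2 = 1 - p^2 := Real.sq_sqrt (by nlinarith)
  set r := Real.sqrt 3 with hrdef
  have hr3 : r^2 = 3 := Real.sq_sqrt (by norm_num)
  set a : E5 := s • spherePt p with hadef
  have hnorm : ‖a‖ = s := by
    rw [hadef, norm_smul, spherePt_norm p hp1 hp2, Real.norm_eq_abs, abs_of_pos hs, mul_one]
  have hane : a ≠ 0 := by
    intro h
    rw [h, norm_zero] at hnorm
    exact absurd hnorm.symm (ne_of_gt hs)
  rw [(hasGradientAt_whalf a hane).gradient]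
  -- coordinates of a
  have ha0 : a 0 = s * p := by
    simp [hadef, spherePt, toE5_apply, PiLp.smul_apply, smul_eq_mul]
  have ha1 : a 1 = 0 := by
    simp [hadef, spherePt, toE5_apply, PiLp.smul_apply, smul_eq_mul]
  have ha2 : a 2 = s * v := by
    simp [hadef, spherePt, toE5_apply, PiLp.smul_apply, smul_eq_mul, hvdef]
  have ha3 : a 3 = 0 := by
    simp [hadef, spherePt, toE5_apply, PiLp.smul_apply, smul_eq_mul]
  have ha4 : a 4 = 0 := by
    simp [hadef, spherePt, toE5_apply, PiLp.smul_apply, smul_eq_mul]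
  -- powers of s via m = sqrt s
  have hm0 : (0:ℝ) < Real.sqrt s := Real.sqrt_pos.mpr hs
  set m := Real.sqrt s with hmdef
  have hm : m^2 = s := Real.sq_sqrt hs.le
  have hmne : m ≠ 0 := ne_of_gt hm0
  have hs32 : s ^ ((3:ℝ)/2) = m ^ 3 := by
    rw [hmdef, Real.sqrt_eq_rpow s,
      ← Real.rpow_natCast (s ^ ((1:ℝ)/2)) 3, ← Real.rpow_mul hs.le]
    norm_num
  have hs72 : s ^ ((7:ℝ)/2) = m ^ 7 := by
    rw [hmdef, Real.sqrt_eq_rpow s,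
      ← Real.rpow_natCast (s ^ ((1:ℝ)/2)) 7, ← Real.rpow_mul hs.le]
    norm_num
  -- CartanP a
  have hC : CartanP a = (m^2)^3 * (p^3 + 3/2*p*v^2) := by
    rw [CartanP, ha0, ha1, ha2, ha3, ha4, hm]
    ring
  -- the gradient vector equals m • G with explicit G
  set G : E5 := toE5 ![3*p^2 + 3/2*v^2 - 3/2*p*(p^3 + 3/2*p*v^2), 3*r/2*v^2,
      3*p*v - 3/2*v*(p^3 + 3/2*p*v^2), 0, 0] with hGdef
  have key : ∀ i : Fin 5, gradW a i = (s ^ ((3:ℝ)/2))⁻¹ * gP a i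
      - (3/2 * CartanP a * (s ^ ((7:ℝ)/2))⁻¹) * a i := by
    intro i
    rw [gradW, hnorm]
    simp [PiLp.sub_apply, PiLp.smul_apply, smul_eq_mul]
  have hmG : ∀ i : Fin 5, (m • G) i = m * G i := by
    intro i; simp [PiLp.smul_apply, smul_eq_mul]
  have hgrad : gradW a = m • G := by
    have hcoord : ∀ i : Fin 5, gradW a i = (m • G) i := by
      intro i
      rw [key i, hmG i, hs32, hs72, hC]
      fin_cases i
      · show (m^3)⁻¹ * gP a 0 - 3/2 * ((m^2)^3 * (p^3 + 3/2*p*v^2)) * (m^7)⁻¹ * a 0 = m * G 0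
        simp only [gP, G, toE5_apply, ha0, ha1, ha2, ha3, ha4, Matrix.cons_val_zero,
          Matrix.cons_val_one, Matrix.head_cons, Matrix.cons_val_two, Matrix.tail_cons,
          Matrix.cons_val_three, Matrix.cons_val_four]
        rw [← hm]
        field_simp
        ring
      · show (m^3)⁻¹ * gP a 1 - 3/2 * ((m^2)^3 * (p^3 + 3/2*p*v^2)) * (m^7)⁻¹ * a 1 = m * G 1
        simp only [gP, G, toE5_apply, ha0, ha1, ha2, ha3, ha4, Matrix.cons_val_zero,
          Matrix.cons_val_one, Matrix.head_cons, Matrix.cons_val_two, Matrix.tail_cons,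
          Matrix.cons_val_three, Matrix.cons_val_four]
        rw [← hm]
        field_simp
        ring
      · show (m^3)⁻¹ * gP a 2 - 3/2 * ((m^2)^3 * (p^3 + 3/2*p*v^2)) * (m^7)⁻¹ * a 2 = m * G 2
        simp only [gP, G, toE5_apply, ha0, ha1, ha2, ha3, ha4, Matrix.cons_val_zero,
          Matrix.cons_val_one, Matrix.head_cons, Matrix.cons_val_two, Matrix.tail_cons,
          Matrix.cons_val_three, Matrix.cons_val_four]
        rw [← hm]
        field_simp
        ring
      · show (m^3)⁻¹ * gP a 3 - 3/2 * ((m^2)^3 * (p^3 + 3/2*p*v^2)) * (m^7)⁻¹ * a 3 = m * G 3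
        simp only [gP, G, toE5_apply, ha0, ha1, ha2, ha3, ha4, Matrix.cons_val_zero,
          Matrix.cons_val_one, Matrix.head_cons, Matrix.cons_val_two, Matrix.tail_cons,
          Matrix.cons_val_three, Matrix.cons_val_four]
        try rw [← hm]
        field_simp
        try ring
      · show (m^3)⁻¹ * gP a 4 - 3/2 * ((m^2)^3 * (p^3 + 3/2*p*v^2)) * (m^7)⁻¹ * a 4 = m * G 4
        simp only [gP, G, toE5_apply, ha0, ha1, ha2, ha3, ha4, Matrix.cons_val_zero,
          Matrix.cons_val_one, Matrix.head_cons, Matrix.cons_val_two, Matrix.tail_cons,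
          Matrix.cons_val_three, Matrix.cons_val_four]
        try rw [← hm]
        field_simp
        try ring
    exact PiLp.ext hcoord
  rw [hgrad, norm_smul, Real.norm_eq_abs, abs_of_pos hm0, mul_pow, hm, norm_sq_eq]
  simp only [G, toE5_apply, Matrix.cons_val_zero, Matrix.cons_val_one, Matrix.head_cons,
    Matrix.cons_val_two, Matrix.tail_cons, Matrix.cons_val_three, Matrix.cons_val_four]
  linear_combination (s*(81/16*p^2*v^4 + 27/4*p^4*v^2 - 243/16*p^2*v^2 + 9*v^2 + 9/4*p^6
      - 81/16*p^4 - 99/16*p^2 + 9)) * hv + (9/4*s*v^4) * hr3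

lemma Wbound (p q : ℝ) (hp1 : -1 ≤ p) (hp2 : p ≤ 1) (hq1 : -1 ≤ q) (hq2 : q ≤ 1) :
    |(3 - (p^2+p*q+q^2)) * ((p+q) * (3 - (p^2-p*q+q^2)))| ≤ 256/27 := by
  set σ := p^2+p*q+q^2 with hσ
  set τ := p^2-p*q+q^2 with hτ
  set e := p^2+q^2 with he
  have hp2q : p^2 ≤ 1 := by nlinarith
  have hq2q : q^2 ≤ 1 := by nlinarith
  have hσ0 : 0 ≤ 3 - σ := by nlinarith [sq_nonneg (p+q)]
  have hτ0 : 0 ≤ 3 - τ := by nlinarith [sq_nonneg (p-q)]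
  have he0 : 0 ≤ e := by positivity
  have he2 : e ≤ 2 := by nlinarith
  set W := (3 - σ) * ((p+q) * (3 - τ)) with hW
  have hW2 : W^2 ≤ 2*e*(3-e)^4 := by
    have hst : (3 - σ) * (3 - τ) ≤ (3-e)^2 := by nlinarith [sq_nonneg (p*q)]
    have hst0 : 0 ≤ (3 - σ) * (3 - τ) := mul_nonneg hσ0 hτ0
    have hpq2 : (p+q)^2 ≤ 2*e := by nlinarith [sq_nonneg (p-q)]
    have h1 : W^2 = (p+q)^2 * ((3-σ)*(3-τ))^2 := by rw [hW]; ring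
    have h2 : ((3-σ)*(3-τ))^2 ≤ ((3-e)^2)^2 := by
      apply pow_le_pow_left₀ hst0 hst
    calc W^2 = (p+q)^2 * ((3-σ)*(3-τ))^2 := h1
      _ ≤ (2*e) * ((3-e)^2)^2 := by
          apply mul_le_mul hpq2 h2 (by positivity) (by nlinarith [sq_nonneg (p-q)])
      _ = 2*e*(3-e)^4 := by ring
  have hone : 2*e*(3-e)^4 ≤ (256/27)^2 := by
    have h1 : 2*e*(3-e)^2 ≤ 8 := by
      nlinarith [mul_nonneg (sq_nonneg (1-e)) (by linarith : (0:ℝ) ≤ 4-e)]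
    have h2 : (3-e)^2 ≤ 9 := by nlinarith
    have h3 : 0 ≤ 2*e*(3-e)^2 := by positivity
    calc 2*e*(3-e)^4 = (2*e*(3-e)^2)*(3-e)^2 := by ring
      _ ≤ 8*9 := mul_le_mul h1 h2 (sq_nonneg _) (by norm_num)
      _ ≤ (256/27)^2 := by norm_num
  have : W^2 ≤ (256/27)^2 := le_trans hW2 hone
  nlinarith [abs_nonneg W, sq_abs W]

lemma final_core (s t A B d : ℝ) (hs0 : 0 < s) (hs1 : s ≤ 1) (ht0 : 0 < t) (ht1 : t ≤ 1)
    (hA2 : A^2 ≤ 4) (hd0 : 0 ≤ d) (hkey : |A^2 - B^2| ≤ 256/27 * d) :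
    |(9*s - 27/16*s*A^2) - (9*t - 27/16*t*B^2)| ≤ 16 * (|s - t| + d) := by
  have h9 : |9 - 27/16*A^2| ≤ 9 := by
    rw [abs_le]
    constructor
    · nlinarith [sq_nonneg A]
    · nlinarith [sq_nonneg A]
  have heq : (9*s - 27/16*s*A^2) - (9*t - 27/16*t*B^2)
      = (s - t) * (9 - 27/16*A^2) + 27/16*t*(B^2 - A^2) := by ring
  calc |(9*s - 27/16*s*A^2) - (9*t - 27/16*t*B^2)|
      = |(s - t) * (9 - 27/16*A^2) + 27/16*t*(B^2 - A^2)| := by rw [heq]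
    _ ≤ |(s - t) * (9 - 27/16*A^2)| + |27/16*t*(B^2 - A^2)| := abs_add_le _ _
    _ = |s - t| * |9 - 27/16*A^2| + 27/16*t*|A^2 - B^2| := by
        rw [abs_mul, abs_mul, abs_mul, abs_sub_comm (B^2) (A^2)]
        rw [abs_of_nonneg (by norm_num : (0:ℝ) ≤ (27:ℝ)/16), abs_of_pos ht0]
    _ ≤ |s - t| * 9 + 27/16*1*(256/27 * d) := by
        apply add_le_add (mul_le_mul_of_nonneg_left h9 (abs_nonneg _))
        have h1 : 27/16*t*|A^2 - B^2| ≤ 27/16*t*(256/27 * d) :=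
          mul_le_mul_of_nonneg_left hkey (by positivity)
        have h2 : 27/16*t*(256/27 * d) ≤ 27/16*1*(256/27 * d) := by
          apply mul_le_mul_of_nonneg_right _ (by positivity)
          linarith
        linarith
    _ ≤ 16 * (|s - t| + d) := by
        have := abs_nonneg (s - t); nlinarith

lemma final_algebra (s t p q : ℝ) (hs0 : 0 < s) (hs1 : s ≤ 1) (ht0 : 0 < t) (ht1 : t ≤ 1)
    (hp1 : -1 ≤ p) (hp2 : p ≤ 1) (hq1 : -1 ≤ q) (hq2 : q ≤ 1) :
    |(9*s - 27/16*s*(3*p - p^3)^2) - (9*t - 27/16*t*(3*q - q^3)^2)| ≤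
      16 * (|s - t| + |p - q|) := by
  have hA2 : (3*p - p^3)^2 ≤ 4 := by
    nlinarith [mul_nonneg (sq_nonneg (1 - p^2)) (by nlinarith : (0:ℝ) ≤ 4 - p^2)]
  have hfact : (3*p - p^3)^2 - (3*q - q^3)^2
      = (p - q) * ((3 - (p^2+p*q+q^2)) * ((p+q) * (3 - (p^2-p*q+q^2)))) := by ring
  have hkey : |(3*p - p^3)^2 - (3*q - q^3)^2| ≤ 256/27 * |p - q| := by
    rw [hfact, abs_mul, mul_comm]
    exact mul_le_mul_of_nonneg_right (Wbound p q hp1 hp2 hq1 hq2) (abs_nonneg _)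
  exact final_core s t _ _ _ hs0 hs1 ht0 ht1 hA2 (abs_nonneg _) hkey

/-- Lemma 3.3: with `a = s·x_p`, `b = t·x_q` and `K = |s−t| + |p−q|`, the
squared gradient norms of `w_{1/2}` differ by at most `16K`. -/
theorem gradient_norm_sq_difference_bound
    (s t : ℝ) (hs : s ∈ Set.Ioc (0:ℝ) 1) (ht : t ∈ Set.Ioc (0:ℝ) 1)
    (p q : ℝ) (hp : p ∈ Set.Icc (-1:ℝ) 1) (hq : q ∈ Set.Icc (-1:ℝ) 1) :
    |‖gradient whalf (s • spherePt p)‖^2 - ‖gradient whalf (t • spherePt q)‖^2| ≤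
      16 * (|s - t| + |p - q|) := by
  rw [grad_norm_sq_value s p hs.1 hp.1 hp.2, grad_norm_sq_value t q ht.1 hq.1 hq.2]
  exact final_algebra s t p q hs.1 hs.2 ht.1 ht.2 hp.1 hp.2 hq.1 hq.2
end
end
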